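/- Let Θ be a random variable with P(Θ = 1) = q = 1 − P(Θ = 0), 0 < q ≤ 1, and let X_1, …, X_n be conditionally independent given Θ, with P(X_i > s | Θ = 0) = 0 and P(X_i > s | Θ = 1) = p_1 ∈ (0,1) for all i. Let N = Σ_{i=1}^n 1{X_i > s} and λ = n p_1. Then d_TV( L(N^{(1)}), Pn^{(1)}(λ) ) ≤ [ (1 − e^{−λ} − λ e^{−λ}) / ( λ (1 − e^{−λ}) ) ] · n p_1² / ( 1 − (1 − p_1)^n ). -/

import Mathlib

open MeasureTheory ProbabilityTheory Filter Set Topology Classical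

/-- Conditional probability `P(A | B)` as a real number. -/
noncomputable def condP {Ω : Type*} [MeasurableSpace Ω] (μ : Measure Ω) (A B : Set Ω) : ℝ :=
  (μ (A ∩ B)).toReal / (μ B).toReal

/-- The Poisson(`lam`) probability mass function. -/
noncomputable def poiPMF (lam : ℝ) (i : ℕ) : ℝ := Real.exp (-lam) * lam ^ i / i.factorial


namespace Stmt19Aux

noncomputable def tf (lam : ℝ) (m : ℕ) : ℝ := lam ^ m / m.factorial
noncomputable def uf (lam : ℝ) (j : ℕ) : ℝ := j.factorial / lam ^ (j+1)
noncomputable def Ss (lam : ℝ) (j : ℕ) : ℝ := ∑ m ∈ Finset.range j, tf lam (m+1)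
noncomputable def Tv (lam : ℝ) : ℝ := Real.exp lam - 1
noncomputable def Gf (lam : ℝ) : ℝ := (Tv lam - lam) / (lam * Tv lam)

variable {lam : ℝ}

lemma tf_pos (hl : 0 < lam) (m : ℕ) : 0 < tf lam m := by
  exact div_pos (pow_pos hl m) (by exact_mod_cast m.factorial_pos)

lemma uf_pos (hl : 0 < lam) (j : ℕ) : 0 < uf lam j := by
  exact div_pos (by exact_mod_cast j.factorial_pos) (pow_pos hl _)

lemma Ss_nonneg (hl : 0 < lam) (j : ℕ) : 0 ≤ Ss lam j :=
  Finset.sum_nonneg fun m _ => (tf_pos hl _).le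

lemma Tv_pos (hl : 0 < lam) : 0 < Tv lam := by
  have := Real.exp_lt_exp.mpr (show (0:ℝ) < lam from hl)
  simp only [Real.exp_zero] at this
  simp [Tv]; linarith

lemma Tv_ge : lam ≤ Tv lam := by
  have := Real.add_one_le_exp lam
  simp [Tv]; linarith

lemma Gf_nonneg (hl : 0 < lam) : 0 ≤ Gf lam :=
  div_nonneg (by linarith [Tv_ge (lam := lam)])
    (mul_nonneg hl.le (Tv_pos hl).le)

lemma summable_tf (hl : 0 < lam) : Summable (tf lam) := Real.summable_pow_div_factorial lam

lemma tsum_tf (hl : 0 < lam) : ∑' m, tf lam m = Real.exp lam := by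
  rw [Real.exp_eq_exp_ℝ, NormedSpace.exp_eq_tsum_div]
  rfl

lemma sum_range_tf (j : ℕ) : ∑ m ∈ Finset.range (j+1), tf lam m = 1 + Ss lam j := by
  rw [Finset.sum_range_succ' (tf lam) j]
  simp [tf, Ss, add_comm]

lemma tail_eq (hl : 0 < lam) (j : ℕ) :
    Tv lam - Ss lam j = ∑' r, tf lam (r + (j+1)) := by
  have h := Summable.sum_add_tsum_nat_add (f := tf lam) (j+1) (summable_tf hl)
  rw [sum_range_tf] at h
  rw [tsum_tf hl] at h
  simp [Tv]; linarith

lemma tail_nonneg (hl : 0 < lam) (j : ℕ) : 0 ≤ Tv lam - Ss lam j := by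
  rw [tail_eq hl j]
  exact tsum_nonneg fun r => (tf_pos hl _).le

-- λ * t m = (m+1) * t (m+1)
lemma lam_mul_tf (hl : 0 < lam) (m : ℕ) : lam * tf lam m = (m+1) * tf lam (m+1) := by
  have h1 : ((m+1).factorial : ℝ) = (m+1) * m.factorial := by
    exact_mod_cast Nat.factorial_succ m
  have h2 : (m.factorial : ℝ) ≠ 0 := by exact_mod_cast m.factorial_ne_zero
  unfold tf
  rw [h1, pow_succ]
  field_simp

-- key1 : (j+1)λ + λ S j ≤ (j+1) S (j+1)
lemma key1 (hl : 0 < lam) (j : ℕ) :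
    ((j:ℝ)+1) * lam + lam * Ss lam j ≤ ((j:ℝ)+1) * Ss lam (j+1) := by
  have hls : lam * Ss lam j = ∑ m ∈ Finset.range j, ((m:ℝ)+2) * tf lam (m+2) := by
    rw [Ss, Finset.mul_sum]
    refine Finset.sum_congr rfl fun m _ => ?_
    have := lam_mul_tf hl (m+1)
    push_cast at this ⊢
    convert this using 2 <;> ring_nf
  have hrs : ((j:ℝ)+1) * Ss lam (j+1)
      = ((j:ℝ)+1) * tf lam 1 + ∑ m ∈ Finset.range j, ((j:ℝ)+1) * tf lam (m+2) := by
    rw [Ss, Finset.sum_range_succ' (fun m => tf lam (m+1)) j, mul_add, Finset.mul_sum]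
    simp only [show ∀ x:ℕ, x+1+1 = x+2 from fun x => rfl]
    ring
  have ht1 : tf lam 1 = lam := by simp [tf]
  rw [hls, hrs, ht1]
  have : ∑ m ∈ Finset.range j, ((m:ℝ)+2) * tf lam (m+2)
      ≤ ∑ m ∈ Finset.range j, ((j:ℝ)+1) * tf lam (m+2) := by
    refine Finset.sum_le_sum fun m hm => ?_
    have hm' : m < j := Finset.mem_range.mp hm
    have : ((m:ℝ)+2) ≤ (j:ℝ)+1 := by
      have : (m:ℝ) + 1 ≤ (j:ℝ) := by exact_mod_cast hm'
      linarith
    exact mul_le_mul_of_nonneg_right this (tf_pos hl _).le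
  linarith


noncomputable def Df (lam : ℝ) (j : ℕ) : ℝ :=
  uf lam (j+1) * Ss lam (j+1) - uf lam j * Ss lam j

lemma Ss_succ (j : ℕ) : Ss lam (j+1) = Ss lam j + tf lam (j+1) := by
  simp [Ss, Finset.sum_range_succ]

-- D ≥ 0
lemma Df_nonneg (hl : 0 < lam) (j : ℕ) : 0 ≤ Df lam j := by
  have hk := key1 hl j
  have hfac : uf lam (j+1) = (j.factorial : ℝ) / lam ^ (j+2) * ((j:ℝ)+1) := by
    have : ((j+1).factorial : ℝ) = ((j:ℝ)+1) * j.factorial := by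
      exact_mod_cast Nat.factorial_succ j
    unfold uf; rw [this]; field_simp
  have hfac0 : uf lam j = (j.factorial : ℝ) / lam ^ (j+2) * lam := by
    have hlne : lam ≠ 0 := hl.ne'
    unfold uf; field_simp; ring
  have hcpos : (0:ℝ) < (j.factorial : ℝ) / lam ^ (j+2) := by positivity
  have h1 : ((j:ℝ)+1) * lam ≥ 0 := by positivity
  have := mul_le_mul_of_nonneg_left hk hcpos.le
  simp only [Df, hfac, hfac0]
  nlinarith [Ss_nonneg hl j, Ss_nonneg hl (j+1)]

-- pointwise comparison of tail terms: uf (j+1) * tf (r+j+2) ≤ uf j * tf (r+j+1)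
lemma tail_term (hl : 0 < lam) (j r : ℕ) :
    uf lam (j+1) * tf lam (r + (j+2)) ≤ uf lam j * tf lam (r + (j+1)) := by
  have e1 : uf lam (j+1) * tf lam (r + (j+2))
      = ((j+1).factorial : ℝ) / ((r+j+2).factorial : ℝ) * lam ^ r := by
    have : r + (j + 2) = (j+2) + r := by ring
    rw [this]
    rw [uf, tf, pow_add]
    have h1 : (0:ℝ) < lam ^ (j+2) := pow_pos hl _
    have h2 : ((j+2+r).factorial : ℝ) ≠ 0 := by exact_mod_cast (j+2+r).factorial_ne_zero
    have h3 : r + j + 2 = j + 2 + r := by ring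
    rw [h3]
    field_simp
    ring
  have e2 : uf lam j * tf lam (r + (j+1))
      = ((j).factorial : ℝ) / ((r+j+1).factorial : ℝ) * lam ^ r := by
    have : r + (j + 1) = (j+1) + r := by ring
    rw [this, uf, tf, pow_add]
    have h2 : ((j+1+r).factorial : ℝ) ≠ 0 := by exact_mod_cast (j+1+r).factorial_ne_zero
    have h3 : r + j + 1 = j + 1 + r := by ring
    rw [h3]
    field_simp
    ring
  rw [e1, e2]
  apply mul_le_mul_of_nonneg_right _ (pow_nonneg hl.le r)
  rw [div_le_div_iff₀ (by exact_mod_cast (r+j+2).factorial_pos) (by exact_mod_cast (r+j+1).factorial_pos)]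
  have hnat : (j+1).factorial * (r+j+1).factorial ≤ j.factorial * (r+j+2).factorial := by
    have h1 : (j+1).factorial = (j+1) * j.factorial := Nat.factorial_succ j
    have h2 : (r+j+2).factorial = (r+j+2) * (r+j+1).factorial := Nat.factorial_succ (r+j+1)
    rw [h1, h2]
    have : (j+1) ≤ (r+j+2) := by omega
    calc (j+1) * j.factorial * (r+j+1).factorial
        ≤ (r+j+2) * j.factorial * (r+j+1).factorial := by
          exact Nat.mul_le_mul_right _ (Nat.mul_le_mul_right _ this)
      _ = j.factorial * ((r+j+2) * (r+j+1).factorial) := by ring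
  exact_mod_cast hnat

-- (u(j+1) - u j) * Tv ≤ D j
lemma key2 (hl : 0 < lam) (j : ℕ) :
    (uf lam (j+1) - uf lam j) * Tv lam ≤ Df lam j := by
  have htail : uf lam (j+1) * (Tv lam - Ss lam (j+1)) ≤ uf lam j * (Tv lam - Ss lam j) := by
    rw [tail_eq hl (j+1), tail_eq hl j]
    rw [← tsum_mul_left, ← tsum_mul_left]
    refine Summable.tsum_le_tsum (fun r => tail_term hl j r) ?_ ?_
    · exact (Summable.mul_left _ ((summable_tf hl).comp_injective (fun a b => by omega)))
    · exact (Summable.mul_left _ ((summable_tf hl).comp_injective (fun a b => by omega)))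
  simp only [Df]
  nlinarith [htail]

-- M bound : t(j+1) * (u(j+1) - D j / Tv) ≤ G
lemma keyM (hl : 0 < lam) (j : ℕ) :
    tf lam (j+1) * (uf lam (j+1) - Df lam j / Tv lam) ≤ Gf lam := by
  have hT := Tv_pos hl
  have htu1 : tf lam (j+1) * uf lam (j+1) = 1 / lam := by
    have h2 : ((j+1).factorial : ℝ) ≠ 0 := by exact_mod_cast (j+1).factorial_ne_zero
    rw [tf, uf]
    rw [show (j+1)+1 = (j+1) + 1 from rfl]
    field_simp [pow_succ]
    ring
  have htu0 : tf lam (j+1) * uf lam j = 1 / ((j:ℝ)+1) := by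
    have h1 : ((j+1).factorial : ℝ) = ((j:ℝ)+1) * j.factorial := by
      exact_mod_cast Nat.factorial_succ j
    have h2 : (j.factorial : ℝ) ≠ 0 := by exact_mod_cast j.factorial_ne_zero
    rw [tf, uf, h1]
    field_simp [pow_succ]
  have htD : tf lam (j+1) * Df lam j = Ss lam (j+1) / lam - Ss lam j / ((j:ℝ)+1) := by
    simp only [Df, mul_sub, ← mul_assoc, htu1, htu0]
    ring
  have hge1 : 1 ≤ tf lam (j+1) * Df lam j := by
    rw [htD]
    have hk := key1 hl j
    have hj1 : (0:ℝ) < (j:ℝ)+1 := by positivity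
    rw [div_sub_div _ _ hl.ne' (by positivity : ((j:ℝ)+1) ≠ 0), le_div_iff₀ (by positivity)]
    nlinarith
  have hG : Gf lam = 1/lam - 1/Tv lam := by
    rw [Gf]
    rw [div_sub_div _ _ hl.ne' hT.ne', one_mul, mul_one]
  rw [mul_sub, htu1, hG]
  have h2 : 1 / Tv lam ≤ tf lam (j+1) * (Df lam j / Tv lam) := by
    rw [mul_div_assoc']
    rw [div_le_div_iff₀ hT hT]
    nlinarith
  linarith


section Delta

noncomputable def aT (lam : ℝ) (A : Set ℕ) : ℝ := ∑' k, if k ∈ A then tf lam k else 0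
noncomputable def Pp (lam : ℝ) (A : Set ℕ) (j : ℕ) : ℝ :=
  ∑ m ∈ Finset.range j, (if (m+1) ∈ A then tf lam (m+1) else 0)
noncomputable def Wf (lam : ℝ) (A : Set ℕ) (j : ℕ) : ℝ :=
  Pp lam A j - (aT lam A / Tv lam) * Ss lam j

variable {lam : ℝ} {A : Set ℕ}

lemma summable_ind (hl : 0 < lam) : Summable (fun k => if k ∈ A then tf lam k else 0) := by
  refine (summable_tf hl).of_nonneg_of_le (fun k => ?_) (fun k => ?_)
  · split <;> simp [le_of_lt (tf_pos hl _)]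
  · split <;> simp [le_of_lt (tf_pos hl _)]

lemma Pp_nonneg (hl : 0 < lam) (j : ℕ) : 0 ≤ Pp lam A j := by
  refine Finset.sum_nonneg fun m _ => ?_
  split <;> simp [le_of_lt (tf_pos hl _)]

lemma Pp_le_Ss (hl : 0 < lam) (j : ℕ) : Pp lam A j ≤ Ss lam j := by
  refine Finset.sum_le_sum fun m _ => ?_
  split <;> simp [le_of_lt (tf_pos hl _)]

lemma Pp_succ (j : ℕ) :
    Pp lam A (j+1) = Pp lam A j + (if (j+1) ∈ A then tf lam (j+1) else 0) := by
  simp [Pp, Finset.sum_range_succ]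

lemma Pp_le_aT (hl : 0 < lam) (hA : A ⊆ Set.Ici 1) (j : ℕ) : Pp lam A j ≤ aT lam A := by
  have h0 : (if (0:ℕ) ∈ A then tf lam 0 else 0) = 0 := by
    simp only [ite_eq_right_iff]
    intro h0A
    exact absurd (hA h0A) (by simp)
  have he : Pp lam A j = ∑ m ∈ Finset.range (j+1), (if m ∈ A then tf lam m else 0) := by
    rw [Finset.sum_range_succ' (fun m => if m ∈ A then tf lam m else 0) j, h0, add_zero, Pp]
  rw [he]
  refine Summable.sum_le_tsum _ (fun k _ => ?_) (summable_ind hl)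
  split <;> simp [le_of_lt (tf_pos hl _)]

lemma aT_le (hl : 0 < lam) (hA : A ⊆ Set.Ici 1) (j : ℕ) :
    aT lam A ≤ Pp lam A (j+1) + (Tv lam - Ss lam (j+1)) := by
  have h0 : (if (0:ℕ) ∈ A then tf lam 0 else 0) = 0 := by
    simp only [ite_eq_right_iff]
    intro h0A
    exact absurd (hA h0A) (by simp)
  have he : Pp lam A (j+1) = ∑ m ∈ Finset.range (j+2), (if m ∈ A then tf lam m else 0) := by
    rw [Finset.sum_range_succ' (fun m => if m ∈ A then tf lam m else 0) (j+1), h0, add_zero, Pp]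
  have hsplit := Summable.sum_add_tsum_nat_add (f := fun k => if k ∈ A then tf lam k else 0) (j+2)
    (summable_ind hl)
  have htail : (∑' r, if (r + (j+2)) ∈ A then tf lam (r + (j+2)) else 0)
      ≤ ∑' r, tf lam (r + (j+2)) := by
    refine Summable.tsum_le_tsum (fun r => ?_) ((summable_ind hl).comp_injective (fun a b => by omega))
      ((summable_tf hl).comp_injective (fun a b => by omega))
    split <;> simp [le_of_lt (tf_pos hl _)]
  rw [tail_eq hl (j+1), he]
  rw [aT, ← hsplit]
  exact add_le_add_right htail _

lemma delta_bound (hl : 0 < lam) (hA : A ⊆ Set.Ici 1) (j : ℕ) :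
    |uf lam (j+1) * Wf lam A (j+1) - uf lam j * Wf lam A j| ≤ Gf lam := by
  set U1 := uf lam (j+1) with hU1
  set U0 := uf lam j with hU0
  set S1 := Ss lam (j+1) with hS1
  set S0 := Ss lam j with hS0
  set t1 := tf lam (j+1) with ht1
  set P := Pp lam A j with hP
  set a := aT lam A with ha
  set T := Tv lam with hT
  set G := Gf lam with hG
  set D := Df lam j with hD
  have hTpos : 0 < T := Tv_pos hl
  have hSsucc : S1 = S0 + t1 := Ss_succ j
  have hDdef : D = U1 * S1 - U0 * S0 := rfl
  obtain ⟨χ, hχ01, hPsucc⟩ : ∃ χ : ℝ, (χ = 0 ∨ χ = 1) ∧ Pp lam A (j+1) = P + χ * t1 := by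
    by_cases hm : (j+1) ∈ A
    · exact ⟨1, Or.inr rfl, by rw [Pp_succ]; simp [hm, ht1, hP]⟩
    · exact ⟨0, Or.inl rfl, by rw [Pp_succ]; simp [hm, hP]⟩
  have hDelta : U1 * Wf lam A (j+1) - U0 * Wf lam A j
      = (U1 - U0) * P + χ * t1 * U1 - (a/T) * D := by
    simp only [Wf, ← hP, ← ha, ← hT, ← hU1, ← hU0, ← hS1, ← hS0, hPsucc, hDdef, hSsucc]
    ring
  rw [hDelta]
  have hK1 : 0 ≤ P := Pp_nonneg hl j
  have hK2 : P ≤ S0 := Pp_le_Ss hl j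
  have hK4 : P + χ * t1 ≤ a := by rw [← hPsucc]; exact Pp_le_aT hl hA (j+1)
  have hK5 : a ≤ P + χ * t1 + (T - S1) := by rw [← hPsucc]; exact aT_le hl hA j
  have hK6 : 0 ≤ D := Df_nonneg hl j
  have hK7 : (U1 - U0) * T ≤ D := key2 hl j
  have hK8 : t1 * (U1 * T - D) ≤ G * T := by
    have := keyM hl j
    have h := mul_le_mul_of_nonneg_right this hTpos.le
    calc t1 * (U1 * T - D) = t1 * (U1 - D / T) * T := by field_simp
      _ ≤ G * T := h
  have hK9 : 0 ≤ G := Gf_nonneg hl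
  have hgoal : |((U1 - U0) * P + χ * t1 * U1 - (a/T) * D)| * T ≤ G * T := by
    have haD : ((U1 - U0) * P + χ * t1 * U1 - (a/T) * D) * T
        = ((U1 - U0) * P + χ * t1 * U1) * T - a * D := by field_simp
    have habs : |((U1 - U0) * P + χ * t1 * U1 - (a/T) * D)| * T
        = |(((U1 - U0) * P + χ * t1 * U1 - (a/T) * D)) * T| := by
      rw [abs_mul, abs_of_pos hTpos]
    rw [habs, haD, abs_le]
    have hprod1 : (P + χ * t1) * D ≤ a * D := mul_le_mul_of_nonneg_right hK4 hK6
    have hprod2 : a * D ≤ (P + χ * t1 + (T - S1)) * D := mul_le_mul_of_nonneg_right hK5 hK6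
    have hprod3 : P * ((U1 - U0) * T - D) ≤ 0 :=
      mul_nonpos_of_nonneg_of_nonpos hK1 (by linarith)
    have hprod4 : S0 * ((U1 - U0) * T - D) ≤ P * ((U1 - U0) * T - D) :=
      mul_le_mul_of_nonpos_right hK2 (by linarith)
    have hid : S0*((U1-U0)*T - D) - (T-S1)*D = t1*D - t1*U1*T := by
      rw [hDdef, hSsucc]; ring
    constructor
    all_goals rcases hχ01 with h1 | h1 <;> rw [h1] at hprod1 hprod2 ⊢ <;>
      linarith [hprod1, hprod2, hprod3, hprod4, hK8, hid, mul_nonneg hK9 hTpos.le]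
  exact le_of_mul_le_mul_right hgoal hTpos

end Delta


section Binom
open Finset

lemma sum_binom_pmf (n : ℕ) (p : ℝ) :
    ∑ k ∈ Finset.range (n+1), (n.choose k : ℝ) * p^k * (1-p)^(n-k) = 1 := by
  have h := add_pow p (1-p) n
  simp only [add_sub_cancel, one_pow] at h
  have h2 : ∑ k ∈ Finset.range (n+1), (n.choose k : ℝ) * p^k * (1-p)^(n-k)
      = ∑ k ∈ Finset.range (n+1), p^k * (1-p)^(n-k) * (n.choose k : ℝ) :=
    Finset.sum_congr rfl fun k _ => by ring
  rw [h2, ← h]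

lemma bin_stein {n : ℕ} (hn : 1 ≤ n) {p : ℝ} (hp0 : 0 < p) (hp1 : p < 1)
    {A : Set ℕ} (hA : A ⊆ Set.Ici 1) :
    |(∑ k ∈ Finset.range (n+1),
        (if k ∈ A then (n.choose k : ℝ) * p^k * (1-p)^(n-k) else 0))
      - (aT (n*p) A / Tv (n*p)) * (1 - (1-p)^n)|
    ≤ Gf (n*p) * ((n:ℝ) * p^2) := by
  set lam : ℝ := (n:ℝ) * p with hlam
  have hl : 0 < lam := by positivity
  set a : ℝ := aT lam A / Tv lam with ha
  set g : ℕ → ℝ := fun k => uf lam (k-1) * Wf lam A (k-1) with hg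
  set b : ℕ → ℝ := fun k => (n.choose k : ℝ) * p^k * (1-p)^(n-k) with hb
  set b' : ℕ → ℝ := fun j => ((n-1).choose j : ℝ) * p^j * (1-p)^(n-1-j) with hb'
  have hp1' : 0 < 1 - p := by linarith
  have hbnn : ∀ k, 0 ≤ b k := fun k => by positivity
  have hb'nn : ∀ k, 0 ≤ b' k := fun k => by positivity
  have hWf0 : Wf lam A 0 = 0 := by simp [Wf, Pp, Ss]
  have hg1 : g 1 = 0 := by simp [hg, hWf0]
  have hg0 : g 0 = 0 := by simp [hg, hWf0]
  -- Stein equation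
  have hstein : ∀ j : ℕ, lam * g (j+2) - ((j:ℝ)+1) * g (j+1)
      = (if (j+1) ∈ A then 1 else 0) - a := by
    intro j
    have e1 : g (j+2) = uf lam (j+1) * Wf lam A (j+1) := rfl
    have e2 : g (j+1) = uf lam j * Wf lam A j := rfl
    have hWdiff : Wf lam A (j+1) - Wf lam A j
        = tf lam (j+1) * ((if (j+1) ∈ A then 1 else 0) - a) := by
      simp only [Wf, Pp_succ, Ss_succ, ha]
      split <;> ring
    have hlu : lam * uf lam (j+1) = ((j:ℝ)+1) * uf lam j := by
      have h1 : ((j+1).factorial : ℝ) = ((j:ℝ)+1) * j.factorial := by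
        exact_mod_cast Nat.factorial_succ j
      rw [uf, uf, h1]
      have : lam ^ (j+1+1) = lam ^ (j+1) * lam := pow_succ lam (j+1)
      field_simp [this]
      ring
    have hcu : ((j:ℝ)+1) * uf lam j * tf lam (j+1) = 1 := by
      have h1 : ((j+1).factorial : ℝ) = ((j:ℝ)+1) * j.factorial := by
        exact_mod_cast Nat.factorial_succ j
      rw [uf, tf, h1]
      have h2 : (j.factorial : ℝ) ≠ 0 := by exact_mod_cast j.factorial_ne_zero
      have h3 : ((j:ℝ)+1) ≠ 0 := by positivity
      field_simp [pow_succ]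
    calc lam * g (j+2) - ((j:ℝ)+1) * g (j+1)
        = ((j:ℝ)+1) * uf lam j * (Wf lam A (j+1) - Wf lam A j) := by
          rw [e1, e2, ← mul_assoc, hlu]; ring
      _ = ((j:ℝ)+1) * uf lam j * tf lam (j+1) * ((if (j+1) ∈ A then 1 else 0) - a) := by
          rw [hWdiff]; ring
      _ = (if (j+1) ∈ A then 1 else 0) - a := by rw [hcu, one_mul]
  -- step 1 : Stein sum equals target difference
  have hstep1 : ∑ k ∈ Finset.range (n+1), b k * (lam * g (k+1) - (k:ℝ) * g k)
      = (∑ k ∈ Finset.range (n+1), (if k ∈ A then b k else 0)) - a * (1 - (1-p)^n) := by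
    rw [Finset.sum_range_succ' (fun k => b k * (lam * g (k+1) - (k:ℝ) * g k)) n]
    simp only [Nat.cast_zero, zero_mul, sub_zero, hg1, mul_zero, add_zero]
    have hL : ∀ j ∈ Finset.range n, b (j+1) * (lam * g (j+1+1) - ((j:ℝ)+1) * g (j+1))
        = b (j+1) * ((if (j+1) ∈ A then 1 else 0) - a) := by
      intro j _
      rw [show j+1+1 = j+2 from rfl, hstein j]
    rw [Finset.sum_congr rfl (fun j hj => by rw [Nat.cast_add, Nat.cast_one, hL j hj])]
    have hsplit : ∑ j ∈ Finset.range n, b (j+1) * ((if (j+1) ∈ A then 1 else 0) - a)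
        = (∑ j ∈ Finset.range n, (if (j+1) ∈ A then b (j+1) else 0))
          - a * ∑ j ∈ Finset.range n, b (j+1) := by
      calc ∑ j ∈ Finset.range n, b (j+1) * ((if (j+1) ∈ A then 1 else 0) - a)
          = ∑ j ∈ Finset.range n,
              ((if (j+1) ∈ A then b (j+1) else 0) - a * b (j+1)) :=
            Finset.sum_congr rfl fun j _ => by split <;> ring
        _ = (∑ j ∈ Finset.range n, (if (j+1) ∈ A then b (j+1) else 0))
              - ∑ j ∈ Finset.range n, a * b (j+1) := Finset.sum_sub_distrib _ _
        _ = (∑ j ∈ Finset.range n, (if (j+1) ∈ A then b (j+1) else 0))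
              - a * ∑ j ∈ Finset.range n, b (j+1) := by rw [Finset.mul_sum]
    rw [hsplit]
    have hind : ∑ j ∈ Finset.range n, (if (j+1) ∈ A then b (j+1) else 0)
        = ∑ k ∈ Finset.range (n+1), (if k ∈ A then b k else 0) := by
      rw [Finset.sum_range_succ' (fun k => if k ∈ A then b k else 0) n]
      have : (if (0:ℕ) ∈ A then b 0 else 0) = 0 := by
        split
        · exact absurd (hA ‹(0:ℕ) ∈ A›) (by simp)
        · rfl
      rw [this, add_zero]
    have hsum : ∑ j ∈ Finset.range n, b (j+1) = 1 - (1-p)^n := by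
      have h := sum_binom_pmf n p
      rw [Finset.sum_range_succ' b n] at h
      have hb0 : b 0 = (1-p)^n := by simp [hb]
      rw [hb0] at h
      linarith
    rw [hind, hsum]
  -- step 2 : Stein sum as np² times weighted increments
  have hkb : ∀ j ∈ Finset.range n, ((j:ℝ)+1) * b (j+1) = (n:ℝ) * p * b' j := by
    intro j hj
    have hjn : j < n := Finset.mem_range.mp hj
    have hch : ((j:ℝ)+1) * (n.choose (j+1) : ℝ) = (n:ℝ) * ((n-1).choose j : ℝ) := by
      have := Nat.add_one_mul_choose_eq (n-1) j
      have hn1 : n - 1 + 1 = n := by omega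
      rw [hn1] at this
      have hnat : (j+1) * n.choose (j+1) = n * (n-1).choose j := by
        rw [this]; exact Nat.mul_comm _ _
      exact_mod_cast hnat
    have hexp : n - (j+1) = n - 1 - j := by omega
    simp only [hb, hb', hexp]
    calc ((j:ℝ)+1) * ((n.choose (j+1) : ℝ) * p^(j+1) * (1-p)^(n-1-j))
        = (((j:ℝ)+1) * (n.choose (j+1) : ℝ)) * p^(j+1) * (1-p)^(n-1-j) := by ring
      _ = ((n:ℝ) * ((n-1).choose j : ℝ)) * p^(j+1) * (1-p)^(n-1-j) := by rw [hch]
      _ = (n:ℝ) * p * (((n-1).choose j : ℝ) * p^j * (1-p)^(n-1-j)) := by rw [pow_succ]; ring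
  have hpascal : ∀ j ∈ Finset.range n, b (j+1) = p * b' j + (1-p) * b' (j+1) := by
    intro j hj
    have hjn : j < n := Finset.mem_range.mp hj
    have hch : (n.choose (j+1) : ℝ) = ((n-1).choose j : ℝ) + ((n-1).choose (j+1) : ℝ) := by
      have hn1 : n - 1 + 1 = n := by omega
      have := Nat.choose_succ_succ (n-1) j
      simp only [Nat.succ_eq_add_one] at this
      rw [hn1] at this
      exact_mod_cast this
    have hexp : n - (j+1) = n - 1 - j := by omega
    by_cases hcase : j + 1 < n
    · have hexp2 : n - 1 - j = (n - 1 - (j+1)) + 1 := by omega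
      simp only [hb, hb', hch, hexp, hexp2]
      rw [pow_succ, pow_succ]
      ring
    · have hjeq : j + 1 = n := by omega
      have hzero : (n-1).choose (j+1) = 0 := Nat.choose_eq_zero_of_lt (by omega)
      simp only [hb, hb', hch, hexp, hzero, Nat.cast_zero]
      rw [pow_succ]
      ring
  have hstep2 : ∑ k ∈ Finset.range (n+1), b k * (lam * g (k+1) - (k:ℝ) * g k)
      = (n:ℝ) * p^2 * ∑ j ∈ Finset.range n, b' j * (g (j+2) - g (j+1)) := by
    have hE1 : ∑ k ∈ Finset.range (n+1), (k:ℝ) * b k * g k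
        = (n:ℝ) * p * ∑ j ∈ Finset.range n, b' j * g (j+1) := by
      rw [Finset.sum_range_succ' (fun k => (k:ℝ) * b k * g k) n]
      simp only [Nat.cast_zero, zero_mul, add_zero]
      rw [Finset.mul_sum]
      refine Finset.sum_congr rfl fun j hj => ?_
      rw [Nat.cast_add, Nat.cast_one]
      rw [show ((j:ℝ)+1) * b (j+1) * g (j+1) = (((j:ℝ)+1) * b (j+1)) * g (j+1) from by ring,
        hkb j hj]
      ring
    have hb'n : b' n = 0 := by
      simp only [hb']
      have : (n-1).choose n = 0 := Nat.choose_eq_zero_of_lt (by omega)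
      rw [this]
      simp
    have hE2 : ∑ k ∈ Finset.range (n+1), b k * g (k+1)
        = (1-p) * ∑ j ∈ Finset.range n, b' j * g (j+1)
          + p * ∑ j ∈ Finset.range n, b' j * g (j+2) := by
      rw [Finset.sum_range_succ' (fun k => b k * g (k+1)) n]
      have hb0g : b 0 * g 1 = 0 := by rw [hg1, mul_zero]
      rw [hb0g, add_zero]
      have : ∀ j ∈ Finset.range n, b (j+1) * g (j+1+1)
          = p * (b' j * g (j+2)) + (1-p) * (b' (j+1) * g (j+1+1)) := by
        intro j hj
        rw [hpascal j hj]
        ring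
      rw [Finset.sum_congr rfl this, Finset.sum_add_distrib, ← Finset.mul_sum, ← Finset.mul_sum]
      have hshift : ∑ j ∈ Finset.range n, b' (j+1) * g (j+1+1)
          = ∑ j ∈ Finset.range n, b' j * g (j+1) := by
        have h1 : ∑ k ∈ Finset.range (n+1), b' k * g (k+1)
            = (∑ j ∈ Finset.range n, b' (j+1) * g (j+1+1)) + b' 0 * g 1 := by
          rw [Finset.sum_range_succ' (fun k => b' k * g (k+1)) n]
        have h2 : ∑ k ∈ Finset.range (n+1), b' k * g (k+1)
            = (∑ j ∈ Finset.range n, b' j * g (j+1)) + b' n * g (n+1) := by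
          rw [Finset.sum_range_succ]
        rw [hg1, mul_zero, add_zero] at h1
        rw [hb'n, zero_mul, add_zero] at h2
        rw [← h1, h2]
      rw [hshift]
      ring
    have hexpand : ∑ k ∈ Finset.range (n+1), b k * (lam * g (k+1) - (k:ℝ) * g k)
        = lam * (∑ k ∈ Finset.range (n+1), b k * g (k+1))
          - ∑ k ∈ Finset.range (n+1), (k:ℝ) * b k * g k := by
      calc ∑ k ∈ Finset.range (n+1), b k * (lam * g (k+1) - (k:ℝ) * g k)
          = ∑ k ∈ Finset.range (n+1),
              (lam * (b k * g (k+1)) - (k:ℝ) * b k * g k) :=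
            Finset.sum_congr rfl fun k _ => by ring
        _ = (∑ k ∈ Finset.range (n+1), lam * (b k * g (k+1)))
              - ∑ k ∈ Finset.range (n+1), (k:ℝ) * b k * g k := Finset.sum_sub_distrib _ _
        _ = lam * (∑ k ∈ Finset.range (n+1), b k * g (k+1))
              - ∑ k ∈ Finset.range (n+1), (k:ℝ) * b k * g k := by rw [Finset.mul_sum]
    have hdd : ∑ j ∈ Finset.range n, b' j * (g (j+2) - g (j+1))
        = (∑ j ∈ Finset.range n, b' j * g (j+2)) - ∑ j ∈ Finset.range n, b' j * g (j+1) := by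
      rw [← Finset.sum_sub_distrib]
      exact Finset.sum_congr rfl fun j _ => by ring
    rw [hexpand, hE2, hE1, hdd]
    ring
  -- step 3 : bound
  have hsum1 : ∑ j ∈ Finset.range n, b' j = 1 := by
    have h := sum_binom_pmf (n-1) p
    have hn1 : n - 1 + 1 = n := by omega
    rw [hn1] at h
    exact h
  have hbound : |∑ j ∈ Finset.range n, b' j * (g (j+2) - g (j+1))| ≤ Gf lam := by
    calc |∑ j ∈ Finset.range n, b' j * (g (j+2) - g (j+1))|
        ≤ ∑ j ∈ Finset.range n, |b' j * (g (j+2) - g (j+1))| := Finset.abs_sum_le_sum_abs _ _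
      _ ≤ ∑ j ∈ Finset.range n, b' j * Gf lam := by
          refine Finset.sum_le_sum fun j _ => ?_
          rw [abs_mul, abs_of_nonneg (hb'nn j)]
          refine mul_le_mul_of_nonneg_left ?_ (hb'nn j)
          exact delta_bound hl hA j
      _ = Gf lam := by rw [← Finset.sum_mul, hsum1, one_mul]
  rw [← hstep1, hstep2]
  rw [abs_mul]
  have hnp2 : |(n:ℝ) * p^2| = (n:ℝ) * p^2 := abs_of_nonneg (by positivity)
  rw [hnp2, mul_comm (Gf lam) ((n:ℝ) * p^2)]
  exact mul_le_mul_of_nonneg_left hbound (by positivity)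


lemma sum_tail_binom (n : ℕ) (p : ℝ) :
    ∑ k ∈ Finset.range (n+1),
      (if 1 ≤ k then (n.choose k : ℝ) * p^k * (1-p)^(n-k) else 0) = 1 - (1-p)^n := by
  rw [Finset.sum_range_succ'
    (fun k => if 1 ≤ k then (n.choose k : ℝ) * p^k * (1-p)^(n-k) else 0) n]
  have h0 : (if (1:ℕ) ≤ 0 then (n.choose 0 : ℝ) * p^0 * (1-p)^(n-0) else 0) = 0 := by
    norm_num
  rw [h0, add_zero]
  have hcong : ∀ j ∈ Finset.range n,
      (if 1 ≤ j+1 then (n.choose (j+1) : ℝ) * p^(j+1) * (1-p)^(n-(j+1)) else 0)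
      = (n.choose (j+1) : ℝ) * p^(j+1) * (1-p)^(n-(j+1)) := by
    intro j _
    rw [if_pos (by omega)]
  rw [Finset.sum_congr rfl hcong]
  have h := sum_binom_pmf n p
  rw [Finset.sum_range_succ' (fun k => (n.choose k : ℝ) * p^k * (1-p)^(n-k)) n] at h
  simp only [Nat.choose_zero_right, Nat.cast_one, pow_zero, Nat.sub_zero, one_mul] at h
  linarith

end Binom


section Measure
open MeasureTheory

variable {Ω : Type*} [MeasurableSpace Ω] (μ : MeasureTheory.Measure Ω) [IsProbabilityMeasure μ]
variable {n : ℕ} (X : Fin n → Ω → ℝ) (Θ : Ω → ℕ) (s : ℝ)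

lemma ev_meas (hmeas : ∀ i, Measurable (X i)) (i : Fin n) :
    MeasurableSet {ω | s < X i ω} := measurableSet_lt measurable_const (hmeas i)

lemma pat_lemma (hmeas : ∀ i, Measurable (X i))
    {q p₁ : ℝ}
    (hcond1 : ∀ S : Finset (Fin n),
      (μ ({ω | Θ ω = 1} ∩ {ω | ∀ i ∈ S, s < X i ω})).toReal = q * p₁ ^ S.card)
    (C : Finset (Fin n)) :
    ∀ S : Finset (Fin n), Disjoint S C →
      (μ ({ω | Θ ω = 1} ∩ {ω | ∀ i ∈ S, s < X i ω} ∩ {ω | ∀ i ∈ C, ¬ s < X i ω})).toReal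
        = q * p₁ ^ S.card * (1 - p₁) ^ C.card := by
  induction C using Finset.induction_on with
  | empty =>
    intro S _
    have he : {ω : Ω | ∀ i ∈ (∅ : Finset (Fin n)), ¬ s < X i ω} = Set.univ := by
      ext ω; simp
    rw [he, Set.inter_univ, hcond1 S]
    simp
  | @insert j C hjC ih =>
    intro S hd
    have hjS : j ∉ S := fun h => (Finset.disjoint_left.mp hd h) (Finset.mem_insert_self j C)
    have hdSC : Disjoint S C := hd.mono_right (Finset.subset_insert j C)
    have hdSC' : Disjoint (insert j S) C := by
      rw [Finset.disjoint_left]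
      intro i hi hiC
      rcases Finset.mem_insert.mp hi with h | h
      · exact hjC (h ▸ hiC)
      · exact (Finset.disjoint_left.mp hdSC h) hiC
    set B : Set Ω := {ω | Θ ω = 1} ∩ {ω | ∀ i ∈ S, s < X i ω} ∩ {ω | ∀ i ∈ C, ¬ s < X i ω}
      with hB
    have hEj : MeasurableSet {ω | s < X j ω} := ev_meas X s hmeas j
    have hsplit := measure_inter_add_diff (μ := μ) B hEj
    have heq1 : B ∩ {ω | s < X j ω}
        = {ω | Θ ω = 1} ∩ {ω | ∀ i ∈ insert j S, s < X i ω} ∩ {ω | ∀ i ∈ C, ¬ s < X i ω} := by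
      ext ω
      simp only [hB, Set.mem_inter_iff, Set.mem_setOf_eq, Finset.mem_insert]
      constructor
      · rintro ⟨⟨⟨h1, h2⟩, h3⟩, h4⟩
        exact ⟨⟨h1, fun i hi => by rcases hi with rfl | hi; exacts [h4, h2 i hi]⟩, h3⟩
      · rintro ⟨⟨h1, h2⟩, h3⟩
        exact ⟨⟨⟨h1, fun i hi => h2 i (Or.inr hi)⟩, h3⟩, h2 j (Or.inl rfl)⟩
    have heq2 : B \ {ω | s < X j ω}
        = {ω | Θ ω = 1} ∩ {ω | ∀ i ∈ S, s < X i ω} ∩ {ω | ∀ i ∈ insert j C, ¬ s < X i ω} := by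
      ext ω
      simp only [hB, Set.mem_diff, Set.mem_inter_iff, Set.mem_setOf_eq, Finset.mem_insert]
      constructor
      · rintro ⟨⟨⟨h1, h2⟩, h3⟩, h4⟩
        exact ⟨⟨h1, h2⟩, fun i hi => by rcases hi with rfl | hi; exacts [h4, h3 i hi]⟩
      · rintro ⟨⟨h1, h2⟩, h3⟩
        exact ⟨⟨⟨h1, h2⟩, fun i hi => h3 i (Or.inr hi)⟩, h3 j (Or.inl rfl)⟩
    rw [heq1, heq2] at hsplit
    have hfin1 : μ ({ω | Θ ω = 1} ∩ {ω | ∀ i ∈ insert j S, s < X i ω}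
        ∩ {ω | ∀ i ∈ C, ¬ s < X i ω}) ≠ ⊤ := measure_ne_top μ _
    have hfin2 : μ ({ω | Θ ω = 1} ∩ {ω | ∀ i ∈ S, s < X i ω}
        ∩ {ω | ∀ i ∈ insert j C, ¬ s < X i ω}) ≠ ⊤ := measure_ne_top μ _
    have htr := congrArg ENNReal.toReal hsplit
    rw [ENNReal.toReal_add hfin1 hfin2] at htr
    have hv1 := ih (insert j S) hdSC'
    have hv2 := ih S hdSC
    rw [hv1, hv2] at htr
    rw [Finset.card_insert_of_notMem hjS] at htr
    rw [Finset.card_insert_of_notMem hjC]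
    have : (μ ({ω | Θ ω = 1} ∩ {ω | ∀ i ∈ S, s < X i ω}
        ∩ {ω | ∀ i ∈ insert j C, ¬ s < X i ω})).toReal
        = q * p₁ ^ S.card * (1 - p₁) ^ C.card - q * p₁ ^ (S.card + 1) * (1 - p₁) ^ C.card := by
      linarith
    rw [this, pow_succ, pow_succ]
    ring

lemma exact_lemma (hmeas : ∀ i, Measurable (X i))
    {q p₁ : ℝ}
    (hcond1 : ∀ S : Finset (Fin n),
      (μ ({ω | Θ ω = 1} ∩ {ω | ∀ i ∈ S, s < X i ω})).toReal = q * p₁ ^ S.card)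
    (S : Finset (Fin n)) :
    (μ ({ω | Θ ω = 1} ∩ {ω | ∀ i, (s < X i ω ↔ i ∈ S)})).toReal
      = q * p₁ ^ S.card * (1 - p₁) ^ (n - S.card) := by
  have hset : {ω : Ω | ∀ i, (s < X i ω ↔ i ∈ S)}
      = {ω | ∀ i ∈ S, s < X i ω} ∩ {ω | ∀ i ∈ Sᶜ, ¬ s < X i ω} := by
    ext ω
    simp only [Set.mem_setOf_eq, Set.mem_inter_iff, Finset.mem_compl]
    constructor
    · intro h
      exact ⟨fun i hi => (h i).mpr hi, fun i hi hlt => hi ((h i).mp hlt)⟩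
    · rintro ⟨h1, h2⟩ i
      constructor
      · intro hlt
        by_contra hiS
        exact h2 i hiS hlt
      · exact h1 i
  rw [hset, ← Set.inter_assoc]
  have := pat_lemma μ X Θ s hmeas hcond1 Sᶜ S disjoint_compl_right
  rw [this, Finset.card_compl, Fintype.card_fin]

end Measure


section Measure2
open MeasureTheory

variable {Ω : Type*} [MeasurableSpace Ω] (μ : MeasureTheory.Measure Ω) [IsProbabilityMeasure μ]
variable {n : ℕ} (X : Fin n → Ω → ℝ) (Θ : Ω → ℕ) (s : ℝ)

lemma exact_meas (hmeas : ∀ i, Measurable (X i)) (S : Finset (Fin n)) :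
    MeasurableSet {ω : Ω | ∀ i, (s < X i ω ↔ i ∈ S)} := by
  have : {ω : Ω | ∀ i, (s < X i ω ↔ i ∈ S)}
      = ⋂ i, (if i ∈ S then {ω | s < X i ω} else {ω | s < X i ω}ᶜ) := by
    ext ω
    simp only [Set.mem_iInter, Set.mem_setOf_eq]
    constructor
    · intro h i
      by_cases hi : i ∈ S
      · simp only [hi, if_true]
        exact (h i).mpr hi
      · simp only [hi, if_false, Set.mem_compl_iff, Set.mem_setOf_eq]
        exact fun hlt => hi ((h i).mp hlt)
    · intro h i
      have := h i
      by_cases hi : i ∈ S <;> simp [hi] at this <;> simp [hi, this]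
  rw [this]
  refine MeasurableSet.iInter fun i => ?_
  split
  · exact ev_meas X s hmeas i
  · exact (ev_meas X s hmeas i).compl

lemma Nk_lemma (hmeas : ∀ i, Measurable (X i)) (hΘmeas : Measurable Θ)
    {q p₁ : ℝ}
    (hcond1 : ∀ S : Finset (Fin n),
      (μ ({ω | Θ ω = 1} ∩ {ω | ∀ i ∈ S, s < X i ω})).toReal = q * p₁ ^ S.card)
    (k : ℕ) :
    (μ ({ω | Θ ω = 1} ∩ {ω | (Finset.univ.filter (fun i => s < X i ω)).card = k})).toReal
      = q * (n.choose k : ℝ) * p₁ ^ k * (1 - p₁) ^ (n - k) := by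
  have hdecomp : {ω : Ω | Θ ω = 1} ∩ {ω | (Finset.univ.filter (fun i => s < X i ω)).card = k}
      = ⋃ S ∈ Finset.univ.powersetCard k,
          ({ω | Θ ω = 1} ∩ {ω | ∀ i, (s < X i ω ↔ i ∈ S)}) := by
    ext ω
    simp only [Set.mem_inter_iff, Set.mem_setOf_eq, Set.mem_iUnion,
      Finset.mem_powersetCard_univ]
    constructor
    · rintro ⟨h1, h2⟩
      refine ⟨Finset.univ.filter (fun i => s < X i ω), h2, h1, fun i => ?_⟩
      simp
    · rintro ⟨S, hS, h1, h2⟩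
      refine ⟨h1, ?_⟩
      have : Finset.univ.filter (fun i => s < X i ω) = S := by
        ext i
        simp [h2 i]
      rw [this, hS]
  rw [hdecomp]
  have hdisj : Set.PairwiseDisjoint
      ((Finset.univ.powersetCard k : Finset (Finset (Fin n))) : Set (Finset (Fin n)))
      (fun S => {ω : Ω | Θ ω = 1} ∩ {ω | ∀ i, (s < X i ω ↔ i ∈ S)}) := by
    intro S _ S' _ hSS'
    refine Set.disjoint_left.mpr ?_
    rintro ω ⟨_, h2⟩ ⟨_, h2'⟩
    apply hSS'
    ext i
    rw [← h2 i, ← h2' i]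
  have hms : ∀ S ∈ Finset.univ.powersetCard k,
      MeasurableSet ({ω : Ω | Θ ω = 1} ∩ {ω | ∀ i, (s < X i ω ↔ i ∈ S)}) := by
    intro S _
    exact (hΘmeas (measurableSet_singleton 1)).inter (exact_meas X s hmeas S)
  rw [measure_biUnion_finset hdisj hms]
  rw [ENNReal.toReal_sum (fun S _ => measure_ne_top μ _)]
  have hval : ∀ S ∈ Finset.univ.powersetCard k,
      (μ ({ω : Ω | Θ ω = 1} ∩ {ω | ∀ i, (s < X i ω ↔ i ∈ S)})).toReal
        = q * p₁ ^ k * (1 - p₁) ^ (n - k) := by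
    intro S hS
    have hcard : S.card = k := Finset.mem_powersetCard_univ.mp hS
    rw [exact_lemma μ X Θ s hmeas hcond1 S, hcard]
  rw [Finset.sum_congr rfl hval, Finset.sum_const, Finset.card_powersetCard,
    Finset.card_univ, Fintype.card_fin, nsmul_eq_mul]
  ring

end Measure2


section Measure3
open MeasureTheory

variable {Ω : Type*} [MeasurableSpace Ω] (μ : MeasureTheory.Measure Ω) [IsProbabilityMeasure μ]
variable {n : ℕ} (X : Fin n → Ω → ℝ) (Θ : Ω → ℕ) (s : ℝ)

lemma NA_lemma (hmeas : ∀ i, Measurable (X i)) (hΘmeas : Measurable Θ)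
    (hΘval : ∀ ω, Θ ω = 0 ∨ Θ ω = 1)
    {q p₁ : ℝ}
    (hcond0 : μ ({ω | Θ ω = 0} ∩ {ω | ∃ i, s < X i ω}) = 0)
    (hcond1 : ∀ S : Finset (Fin n),
      (μ ({ω | Θ ω = 1} ∩ {ω | ∀ i ∈ S, s < X i ω})).toReal = q * p₁ ^ S.card)
    (A : Set ℕ) (hA : A ⊆ Set.Ici 1) :
    (μ {ω | (Finset.univ.filter (fun i => s < X i ω)).card ∈ A}).toReal
      = ∑ k ∈ Finset.range (n+1),
          (if k ∈ A then q * (n.choose k : ℝ) * p₁ ^ k * (1 - p₁) ^ (n - k) else 0) := by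
  set Nf : Ω → ℕ := fun ω => (Finset.univ.filter (fun i => s < X i ω)).card with hNf
  have hNmeas : Measurable Nf := by
    have : Nf = fun ω => ∑ i, (if s < X i ω then 1 else 0) := by
      funext ω
      rw [hNf]
      simp [Finset.sum_boole]
    rw [this]
    exact Finset.measurable_sum _ fun i _ =>
      Measurable.ite (ev_meas X s hmeas i) measurable_const measurable_const
  have hTh1 : MeasurableSet {ω : Ω | Θ ω = 1} := hΘmeas (measurableSet_singleton 1)
  -- the part off {Θ = 1} is null
  have hnull : μ ({ω | Nf ω ∈ A} \ {ω | Θ ω = 1}) = 0 := by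
    refine measure_mono_null ?_ hcond0
    rintro ω ⟨h1, h2⟩
    have hΘ0 : Θ ω = 0 := (hΘval ω).resolve_right h2
    refine ⟨hΘ0, ?_⟩
    have h1' : 1 ≤ Nf ω := hA h1
    have : (Finset.univ.filter (fun i => s < X i ω)).Nonempty := by
      rw [← Finset.card_pos]
      exact h1'
    obtain ⟨i, hi⟩ := this
    exact ⟨i, (Finset.mem_filter.mp hi).2⟩
  have hsplit := measure_inter_add_diff (μ := μ) {ω | Nf ω ∈ A} hTh1
  rw [hnull, add_zero] at hsplit
  rw [← hsplit]
  -- decompose over values of Nf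
  have hdecomp : {ω : Ω | Nf ω ∈ A} ∩ {ω | Θ ω = 1}
      = ⋃ k ∈ (Finset.range (n+1)).filter (· ∈ A),
          ({ω | Θ ω = 1} ∩ {ω | Nf ω = k}) := by
    ext ω
    simp only [Set.mem_inter_iff, Set.mem_setOf_eq, Set.mem_iUnion, Finset.mem_filter,
      Finset.mem_range]
    constructor
    · rintro ⟨h1, h2⟩
      refine ⟨Nf ω, ⟨?_, h1⟩, h2, rfl⟩
      have : Nf ω ≤ n := by
        rw [hNf]
        calc (Finset.univ.filter (fun i => s < X i ω)).card
            ≤ (Finset.univ : Finset (Fin n)).card := Finset.card_filter_le _ _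
          _ = n := by rw [Finset.card_univ, Fintype.card_fin]
      omega
    · rintro ⟨k, ⟨_, hkA⟩, h1, h2⟩
      exact ⟨h2 ▸ hkA, h1⟩
  rw [hdecomp]
  have hdisj : Set.PairwiseDisjoint
      (((Finset.range (n+1)).filter (· ∈ A) : Finset ℕ) : Set ℕ)
      (fun k => {ω : Ω | Θ ω = 1} ∩ {ω | Nf ω = k}) := by
    intro k _ k' _ hkk'
    refine Set.disjoint_left.mpr ?_
    rintro ω ⟨_, h2⟩ ⟨_, h2'⟩
    exact hkk' (h2 ▸ h2')
  have hms : ∀ k ∈ (Finset.range (n+1)).filter (· ∈ A),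
      MeasurableSet ({ω : Ω | Θ ω = 1} ∩ {ω | Nf ω = k}) := fun k _ =>
    hTh1.inter (hNmeas (measurableSet_singleton k))
  rw [measure_biUnion_finset hdisj hms]
  rw [ENNReal.toReal_sum (fun k _ => measure_ne_top μ _)]
  rw [Finset.sum_congr rfl (fun k _ => Nk_lemma μ X Θ s hmeas hΘmeas hcond1 k)]
  rw [Finset.sum_filter]

end Measure3

end Stmt19Aux

/-- Zero-inflated exceedances: given a phase variable `Θ ∈ {0,1}` with
`P(Θ = 1) = q ∈ (0,1]`, conditionally on `Θ = 0` no exceedance occurs, and conditionally on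
`Θ = 1` the exceedance events are i.i.d. with probability `p₁` (encoded by
`P(Θ = 1, X_i > s ∀ i ∈ S) = q p₁^{|S|}` for all `S`).  With `λ = n p₁`, the number of
exceedances `N` satisfies
`d_TV(L(N^{(1)}), Pn^{(1)}(λ)) ≤ [(1 − e^{−λ} − λe^{−λ})/(λ(1 − e^{−λ}))]·n p₁²/(1 − (1 − p₁)ⁿ)`. -/
theorem stmt19 {Ω : Type*} [MeasurableSpace Ω] (μ : Measure Ω) [IsProbabilityMeasure μ]
    (n : ℕ) (hn : 1 ≤ n) (X : Fin n → Ω → ℝ) (hmeas : ∀ i, Measurable (X i))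
    (Θ : Ω → ℕ) (hΘmeas : Measurable Θ) (hΘval : ∀ ω, Θ ω = 0 ∨ Θ ω = 1)
    (q : ℝ) (hq0 : 0 < q) (hq1 : q ≤ 1) (hq : (μ {ω | Θ ω = 1}).toReal = q)
    (s : ℝ) (p₁ : ℝ) (hp₁0 : 0 < p₁) (hp₁1 : p₁ < 1)
    (hcond0 : μ ({ω | Θ ω = 0} ∩ {ω | ∃ i, s < X i ω}) = 0)
    (hcond1 : ∀ S : Finset (Fin n),
      (μ ({ω | Θ ω = 1} ∩ {ω | ∀ i ∈ S, s < X i ω})).toReal = q * p₁ ^ S.card)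
    (lam : ℝ) (hlam : lam = n * p₁) :
    ∀ A : Set ℕ, A ⊆ Set.Ici 1 →
      |condP μ {ω | (∑ i, if s < X i ω then 1 else 0) ∈ A}
          {ω | 1 ≤ ∑ i, if s < X i ω then 1 else 0} -
        (∑' k : ℕ, if k ∈ A then poiPMF lam k else 0) / (1 - Real.exp (-lam))| ≤
      ((1 - Real.exp (-lam) - lam * Real.exp (-lam)) / (lam * (1 - Real.exp (-lam)))) *
        ((n : ℝ) * p₁ ^ 2) / (1 - (1 - p₁) ^ n) := by
  intro A hA
  classical
  subst hlam
  have hn0 : (0:ℝ) < n := by exact_mod_cast Nat.lt_of_lt_of_le Nat.zero_lt_one hn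
  have hl : 0 < (n:ℝ) * p₁ := mul_pos hn0 hp₁0
  set lam : ℝ := (n:ℝ) * p₁ with hlam
  have hbden : 0 < 1 - (1-p₁)^n := by
    have : (1-p₁)^n < 1 := pow_lt_one₀ (by linarith) (by linarith) (by omega)
    linarith
  have hNeq : ∀ ω, (∑ i, if s < X i ω then 1 else 0)
      = (Finset.univ.filter (fun i => s < X i ω)).card := by
    intro ω
    simp [Finset.sum_boole]
  have hsetA : {ω | (∑ i, if s < X i ω then 1 else 0) ∈ A}
      = {ω | (Finset.univ.filter (fun i => s < X i ω)).card ∈ A} := by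
    ext ω; simp [hNeq ω]
  have hset1 : {ω | 1 ≤ ∑ i, if s < X i ω then 1 else 0}
      = {ω | (Finset.univ.filter (fun i => s < X i ω)).card ∈ Set.Ici 1} := by
    ext ω; simp [hNeq ω]
  have hinter : {ω | (Finset.univ.filter (fun i => s < X i ω)).card ∈ A}
      ∩ {ω | (Finset.univ.filter (fun i => s < X i ω)).card ∈ Set.Ici 1}
      = {ω | (Finset.univ.filter (fun i => s < X i ω)).card ∈ A} := by
    apply Set.inter_eq_self_of_subset_left
    intro ω hω
    exact hA hω
  have hnum := Stmt19Aux.NA_lemma μ X Θ s hmeas hΘmeas hΘval hcond0 hcond1 A hA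
  have hden := Stmt19Aux.NA_lemma μ X Θ s hmeas hΘmeas hΘval hcond0 hcond1
    (Set.Ici 1) (subset_refl _)
  have hdenval : (μ {ω | (Finset.univ.filter (fun i => s < X i ω)).card ∈ Set.Ici 1}).toReal
      = q * (1 - (1-p₁)^n) := by
    rw [hden, ← Stmt19Aux.sum_tail_binom n p₁, Finset.mul_sum]
    refine Finset.sum_congr rfl fun k _ => ?_
    by_cases hk : (1:ℕ) ≤ k
    · rw [if_pos (Set.mem_Ici.mpr hk), if_pos hk]; ring
    · rw [if_neg (fun h => hk (Set.mem_Ici.mp h)), if_neg hk, mul_zero]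
  have hnumval : (μ {ω | (Finset.univ.filter (fun i => s < X i ω)).card ∈ A}).toReal
      = q * ∑ k ∈ Finset.range (n+1),
          (if k ∈ A then (n.choose k : ℝ) * p₁ ^ k * (1 - p₁) ^ (n - k) else 0) := by
    rw [hnum, Finset.mul_sum]
    refine Finset.sum_congr rfl fun k _ => ?_
    by_cases hk : k ∈ A
    · rw [if_pos hk, if_pos hk]; ring
    · rw [if_neg hk, if_neg hk, mul_zero]
  -- identify the conditional probability
  have hcondP : condP μ {ω | (∑ i, if s < X i ω then 1 else 0) ∈ A}
      {ω | 1 ≤ ∑ i, if s < X i ω then 1 else 0}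
      = (∑ k ∈ Finset.range (n+1),
          (if k ∈ A then (n.choose k : ℝ) * p₁ ^ k * (1 - p₁) ^ (n - k) else 0))
        / (1 - (1-p₁)^n) := by
    rw [condP, hsetA, hset1, hinter, hnumval, hdenval, mul_div_mul_left _ _ hq0.ne']
  -- identify the Poisson tail terms
  have hexp1 : Real.exp (-lam) * Real.exp lam = 1 := by
    rw [← Real.exp_add]; simp
  have hexpne : Real.exp (-lam) ≠ 0 := Real.exp_ne_zero _
  have hc : 1 - Real.exp (-lam) = Real.exp (-lam) * Stmt19Aux.Tv lam := by
    rw [Stmt19Aux.Tv]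
    linear_combination -hexp1
  have hpois : (∑' k : ℕ, if k ∈ A then poiPMF lam k else 0)
      = Real.exp (-lam) * Stmt19Aux.aT lam A := by
    rw [Stmt19Aux.aT, ← tsum_mul_left]
    refine tsum_congr fun k => ?_
    rw [poiPMF, Stmt19Aux.tf]
    split <;> simp [mul_div_assoc]
  have haid : (∑' k : ℕ, if k ∈ A then poiPMF lam k else 0) / (1 - Real.exp (-lam))
      = Stmt19Aux.aT lam A / Stmt19Aux.Tv lam := by
    rw [hpois, hc, mul_div_mul_left _ _ hexpne]
  have hGid : (1 - Real.exp (-lam) - lam * Real.exp (-lam))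
      / (lam * (1 - Real.exp (-lam))) = Stmt19Aux.Gf lam := by
    have h1 : 1 - Real.exp (-lam) - lam * Real.exp (-lam)
        = Real.exp (-lam) * (Stmt19Aux.Tv lam - lam) := by
      rw [Stmt19Aux.Tv]
      linear_combination -hexp1
    have h2 : lam * (1 - Real.exp (-lam)) = Real.exp (-lam) * (lam * Stmt19Aux.Tv lam) := by
      rw [hc]; ring
    rw [h1, h2, mul_div_mul_left _ _ hexpne, Stmt19Aux.Gf]
  rw [hcondP, haid, hGid]
  have hbin := Stmt19Aux.bin_stein hn hp₁0 hp₁1 hA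
  have hTvpos : 0 < Stmt19Aux.Tv lam := Stmt19Aux.Tv_pos hl
  have hdiff : (∑ k ∈ Finset.range (n+1),
        (if k ∈ A then (n.choose k : ℝ) * p₁ ^ k * (1 - p₁) ^ (n - k) else 0))
        / (1 - (1-p₁)^n) - Stmt19Aux.aT lam A / Stmt19Aux.Tv lam
      = ((∑ k ∈ Finset.range (n+1),
          (if k ∈ A then (n.choose k : ℝ) * p₁ ^ k * (1 - p₁) ^ (n - k) else 0))
        - (Stmt19Aux.aT lam A / Stmt19Aux.Tv lam) * (1 - (1-p₁)^n)) / (1 - (1-p₁)^n) := by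
    field_simp
  rw [hdiff, abs_div, abs_of_pos hbden]
  exact div_le_div_of_nonneg_right hbin hbden.le
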